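/- Let u : ℝ × ℝ^m → ℝ be smooth, everywhere positive, ℤ^m-periodic in the spatial variable, with ∂_t u = Δ_x u. Set f = −ln u and E(t) = ∫_{[0,1]^m} |∇f(t,x)|²·u(t,x) dx. Then E is differentiable and E'(t) = ∫_{[0,1]^m} ( −2(Δf)² + 3|∇f|²·Δf − |∇f|⁴ )·u dx for every t. -/

import Mathlib

open MeasureTheory
open scoped RealInnerProductSpace

noncomputable section

abbrev E (m : ℕ) := EuclideanSpace ℝ (Fin m)

/-- The standard orthonormal basis of `ℝ^m`. -/
def eE (m : ℕ) (a : Fin m) : E m := EuclideanSpace.single a 1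

/-- Second Fréchet derivative as a bilinear form. -/
def D2E (m : ℕ) (g : E m → ℝ) (x X Y : E m) : ℝ := iteratedFDeriv ℝ 2 g x ![X, Y]

/-- The Laplacian `Δg(x) = Σ_a D²g(x)[e_a, e_a]`. -/
def lapE (m : ℕ) (g : E m → ℝ) (x : E m) : ℝ := ∑ a, D2E m g x (eE m a) (eE m a)

/-- The unit cube `[0,1]^m`. -/
def cube (m : ℕ) : Set (E m) := {x | ∀ i, x i ∈ Set.Icc (0 : ℝ) 1}

/-- The vector of `ℤ^m ⊂ ℝ^m` with integer coordinates `k`. -/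
def latt (m : ℕ) (k : Fin m → ℤ) : E m := WithLp.toLp 2 (fun i => (k i : ℝ))

namespace EnergyAux

lemma inf1 : (1 : WithTop ℕ∞) ≤ ((⊤:ℕ∞) : WithTop ℕ∞) := by decide
lemma infp1 : ((⊤:ℕ∞) : WithTop ℕ∞) + 1 ≤ ((⊤:ℕ∞) : WithTop ℕ∞) := by decide
lemma inf2 : (2 : WithTop ℕ∞) ≤ ((⊤:ℕ∞) : WithTop ℕ∞) := by decide

variable {G : Type*} [NormedAddCommGroup G] [NormedSpace ℝ G]

/-- directional derivative operator -/
def pd (v : G) (φ : G → ℝ) : G → ℝ := fun z => fderiv ℝ φ z v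

lemma pd_smooth {φ : G → ℝ} (hφ : ContDiff ℝ (⊤ : ℕ∞) φ) (v : G) :
    ContDiff ℝ (⊤ : ℕ∞) (pd v φ) :=
  (ContinuousLinearMap.apply ℝ ℝ v).contDiff.comp (hφ.fderiv_right infp1)

lemma pd_diff {φ : G → ℝ} (hφ : ContDiff ℝ (⊤ : ℕ∞) φ) : Differentiable ℝ φ :=
  hφ.differentiable (by simp)

lemma pd_mul {φ ψ : G → ℝ} (hφ : ContDiff ℝ (⊤ : ℕ∞) φ) (hψ : ContDiff ℝ (⊤ : ℕ∞) ψ)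
    (v z : G) :
    pd v (fun z => φ z * ψ z) z = pd v φ z * ψ z + φ z * pd v ψ z := by
  have h := fderiv_fun_mul (𝕜 := ℝ) ((pd_diff hφ).differentiableAt (x := z))
    ((pd_diff hψ).differentiableAt)
  simp only [pd, h, ContinuousLinearMap.add_apply, ContinuousLinearMap.smul_apply,
    smul_eq_mul]
  ring

lemma pd_sq {φ : G → ℝ} (hφ : ContDiff ℝ (⊤ : ℕ∞) φ) (v z : G) :
    pd v (fun z => φ z ^ 2) z = 2 * (φ z * pd v φ z) := by
  have h : (fun z => φ z ^ 2) = fun z => φ z * φ z := by funext y; ring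
  rw [h, pd_mul hφ hφ]
  ring

lemma pd_neg {φ : G → ℝ} (v z : G) :
    pd v (fun z => -(φ z)) z = -(pd v φ z) := by
  simp [pd, fderiv_neg]

lemma pd_exp {φ : G → ℝ} (hφ : ContDiff ℝ (⊤ : ℕ∞) φ) (v z : G) :
    pd v (fun z => Real.exp (φ z)) z = Real.exp (φ z) * pd v φ z := by
  have h := ((pd_diff hφ).differentiableAt (x := z)).hasFDerivAt.exp
  simp only [pd, h.fderiv, ContinuousLinearMap.smul_apply, smul_eq_mul]

lemma pd_sum {ι : Type*} (s : Finset ι) {φ : ι → G → ℝ}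
    (hφ : ∀ i, ContDiff ℝ (⊤ : ℕ∞) (φ i)) (v z : G) :
    pd v (fun z => ∑ i ∈ s, φ i z) z = ∑ i ∈ s, pd v (φ i) z := by
  have h := fderiv_fun_sum (𝕜 := ℝ) (u := s) (A := fun i => φ i) (x := z)
    (fun i _ => (pd_diff (hφ i)).differentiableAt)
  simp [pd, h]

lemma fderiv_pd_apply {φ : G → ℝ} (hφ : ContDiff ℝ (⊤ : ℕ∞) φ) (z v w : G) :
    fderiv ℝ (pd w φ) z v = fderiv ℝ (fderiv ℝ φ) z v w := by
  have hd : DifferentiableAt ℝ (fderiv ℝ φ) z :=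
    ((hφ.fderiv_right infp1).differentiable (by simp)).differentiableAt
  have h := fderiv_comp (𝕜 := ℝ) z
    (ContinuousLinearMap.apply ℝ ℝ w).differentiableAt hd
  simp only [Function.comp_def, ContinuousLinearMap.apply_apply] at h
  show fderiv ℝ (fun y => fderiv ℝ φ y w) z v = _
  rw [h]
  simp [ContinuousLinearMap.fderiv]

lemma pd_comm {φ : G → ℝ} (hφ : ContDiff ℝ (⊤ : ℕ∞) φ) (v w z : G) :
    pd v (pd w φ) z = pd w (pd v φ) z := by
  have h2 : ContDiffAt ℝ 2 φ z := (hφ.of_le inf2).contDiffAt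
  show fderiv ℝ (pd w φ) z v = fderiv ℝ (pd v φ) z w
  rw [fderiv_pd_apply hφ, fderiv_pd_apply hφ]
  exact h2.isSymmSndFDerivAt (by simp) v w

variable {m : ℕ}

/-- slice in t has the expected derivative -/
lemma hasDerivAt_slice {φ : ℝ × E m → ℝ} (hφ : ContDiff ℝ (⊤ : ℕ∞) φ) (t : ℝ) (x : E m) :
    HasDerivAt (fun s => φ (s, x)) (pd ((1:ℝ), (0:E m)) φ (t, x)) t := by
  have hc : HasDerivAt (fun s : ℝ => (s, x)) ((1:ℝ), (0:E m)) t :=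
    (hasDerivAt_id t).prodMk (hasDerivAt_const t x)
  exact ((pd_diff hφ).differentiableAt.hasFDerivAt).comp_hasDerivAt t hc

/-- x-slice has the expected fderiv -/
lemma hasFDerivAt_slice {φ : ℝ × E m → ℝ} (hφ : ContDiff ℝ (⊤ : ℕ∞) φ) (t : ℝ) (x : E m) :
    HasFDerivAt (fun y => φ (t, y))
      ((fderiv ℝ φ (t, x)).comp (ContinuousLinearMap.inr ℝ ℝ (E m))) x := by
  have hc : HasFDerivAt (fun y : E m => (t, y)) (ContinuousLinearMap.inr ℝ ℝ (E m)) x :=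
    (hasFDerivAt_const t x).prodMk (hasFDerivAt_id x)
  exact ((pd_diff hφ).differentiableAt.hasFDerivAt).comp x hc

lemma fderiv_slice {φ : ℝ × E m → ℝ} (hφ : ContDiff ℝ (⊤ : ℕ∞) φ) (t : ℝ) (x : E m)
    (v : E m) :
    fderiv ℝ (fun y => φ (t, y)) x v = pd ((0:ℝ), v) φ (t, x) := by
  rw [(hasFDerivAt_slice hφ t x).fderiv]
  rfl

lemma slice_smooth {φ : ℝ × E m → ℝ} (hφ : ContDiff ℝ (⊤ : ℕ∞) φ) (t : ℝ) :
    ContDiff ℝ (⊤ : ℕ∞) (fun y => φ (t, y)) :=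
  hφ.comp (contDiff_const.prodMk contDiff_id)


variable {m : ℕ} in
lemma lap_slice {φ : ℝ × E m → ℝ} (hφ : ContDiff ℝ (⊤ : ℕ∞) φ) (t : ℝ) (x : E m) :
    lapE m (fun y => φ (t, y)) x
      = ∑ a, pd ((0:ℝ), eE m a) (pd ((0:ℝ), eE m a) φ) (t, x) := by
  unfold lapE D2E
  refine Finset.sum_congr rfl fun a _ => ?_
  have hψ : ContDiff ℝ (⊤ : ℕ∞) (fun y => φ (t, y)) := slice_smooth hφ t
  rw [iteratedFDeriv_two_apply]
  have h1 : fderiv ℝ (fderiv ℝ (fun y => φ (t, y))) x (![eE m a, eE m a] 0) (![eE m a, eE m a] 1)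
      = fderiv ℝ (pd (eE m a) (fun y => φ (t, y))) x (eE m a) :=
    (fderiv_pd_apply hψ x (eE m a) (eE m a)).symm
  rw [h1]
  have h2 : (pd (eE m a) (fun y => φ (t, y)))
      = fun y => pd ((0:ℝ), eE m a) φ (t, y) := by
    funext y
    exact fderiv_slice hφ t y (eE m a)
  rw [h2]
  exact fderiv_slice (pd_smooth hφ _) t x (eE m a)


lemma norm_gradient_sq (ψ : E m → ℝ) (x : E m) :
    ‖gradient ψ x‖ ^ 2 = ∑ a, (fderiv ℝ ψ x (eE m a)) ^ 2 := by
  have hcoord : ∀ a, gradient ψ x a = fderiv ℝ ψ x (eE m a) := by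
    intro a
    have h1 : ⟪gradient ψ x, eE m a⟫ = fderiv ℝ ψ x (eE m a) :=
      InnerProductSpace.toDual_symm_apply
    rw [← h1, eE]
    rw [EuclideanSpace.inner_single_right]
    simp
  rw [EuclideanSpace.norm_eq]
  rw [Real.sq_sqrt (by positivity)]
  refine Finset.sum_congr rfl fun a _ => ?_
  rw [hcoord a, Real.norm_eq_abs, sq_abs]

/-- translation invariance of fderiv under a period -/
lemma fderiv_periodic {w : G → ℝ} (hw : Differentiable ℝ w) (c : G)
    (hper : ∀ z, w (z + c) = w z) (z v : G) :
    fderiv ℝ w (z + c) v = fderiv ℝ w z v := by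
  have htr : HasFDerivAt (fun y : G => y + c) (ContinuousLinearMap.id ℝ G) z :=
    (hasFDerivAt_id z).add_const c
  have h2 : HasFDerivAt (fun y => w (y + c))
      ((fderiv ℝ w (z + c)).comp (ContinuousLinearMap.id ℝ G)) z :=
    (hw.differentiableAt.hasFDerivAt).comp z htr
  have h : (fun y => w (y + c)) = w := by funext y; rw [hper]
  rw [h] at h2
  rw [h2.fderiv]
  rfl

lemma integral_pd_eq_zero {m : ℕ} (w : E m → ℝ) (hw : ContDiff ℝ (⊤ : ℕ∞) w)
    (hper : ∀ (x : E m) (k : Fin m → ℤ), w (x + latt m k) = w x) (a : Fin m) :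
    (∫ x in cube m, fderiv ℝ w x (eE m a)) = 0 := by
  obtain ⟨n, rfl⟩ : ∃ n, m = n + 1 := ⟨m - 1, (Nat.succ_pred_eq_of_pos a.pos).symm⟩
  set eqv := EuclideanSpace.equiv (Fin (n+1)) ℝ with heqv
  set W : (Fin (n + 1) → ℝ) → ℝ := fun y => w (eqv.symm y) with hWdef
  have hWsm : ContDiff ℝ (⊤ : ℕ∞) W := hw.comp eqv.symm.contDiff
  have hWd : Differentiable ℝ W := hWsm.differentiable (by simp)
  have hsingle : (eqv.symm (Pi.single a 1) : E (n+1)) = latt (n+1) (Pi.single a 1) := by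
    ext j
    by_cases h : j = a <;> simp [latt, Pi.single_apply, h, eqv]
  have hWper : ∀ y, W (y + Pi.single a 1) = W y := by
    intro y
    simp only [hWdef]
    rw [map_add, hsingle, hper]
  -- the vector field
  classical
  set F0 : Fin (n+1) → (Fin (n+1) → ℝ) → ℝ := fun i y => if i = a then W y else 0 with hF0
  set F0' : Fin (n+1) → (Fin (n+1) → ℝ) → (Fin (n+1) → ℝ) →L[ℝ] ℝ :=
    fun i y => if i = a then fderiv ℝ W y else 0 with hF0'
  have hdivpt : ∀ y : Fin (n+1) → ℝ,
      (∑ i, F0' i y (Pi.single i 1)) = fderiv ℝ W y (Pi.single a 1) := by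
    intro y
    rw [Finset.sum_eq_single a]
    · simp [hF0']
    · intro b _ hb; simp [hF0', hb]
    · intro h; exact absurd (Finset.mem_univ a) h
  have key := MeasureTheory.integral_divergence_of_hasFDerivAt_off_countable
    (a := (0 : Fin (n+1) → ℝ)) (b := (1 : Fin (n+1) → ℝ)) zero_le_one
    (fun y i => F0 i y) (fun y => ContinuousLinearMap.pi fun i => F0' i y)
    ∅ Set.countable_empty ?hc ?hd ?hi
  case hc =>
    apply continuousOn_pi.2
    intro i
    by_cases h : i = a <;> simp only [hF0, h, if_true, if_false]
    · exact hWsm.continuous.continuousOn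
    · exact continuousOn_const
  case hd =>
    intro y _
    apply hasFDerivAt_pi.2
    intro i
    by_cases h : i = a <;> simp only [hF0, hF0', h, if_true, if_false]
    · exact hWd.differentiableAt.hasFDerivAt
    · exact hasFDerivAt_const 0 y
  case hi =>
    have : ContinuousOn (fun y => fderiv ℝ W y (Pi.single a 1)) (Set.Icc 0 1) := by
      exact ((ContinuousLinearMap.apply ℝ ℝ (Pi.single a 1)).continuous.comp
        ((hWsm.fderiv_right infp1).continuous)).continuousOn
    refine (this.integrableOn_compact isCompact_Icc).congr_fun ?_ measurableSet_Icc
    intro y _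
    simp only [ContinuousLinearMap.pi_apply]
    exact (hdivpt y).symm
  -- boundary terms vanish by periodicity
  have hins : ∀ x : Fin n → ℝ,
      (Fin.insertNth a (1:ℝ) x : Fin (n+1) → ℝ)
        = (Fin.insertNth a (0:ℝ) x : Fin (n+1) → ℝ) + Pi.single a 1 := by
    intro x
    funext j
    refine Fin.succAboveCases a ?_ ?_ j
    · simp
    · intro i
      simp [Fin.insertNth_apply_succAbove, Pi.single_eq_of_ne (Fin.succAbove_ne a i)]
  have hRHS0 : ∀ i : Fin (n+1),
      ((∫ x in Set.Icc ((0:Fin (n+1) → ℝ) ∘ i.succAbove) ((1:Fin (n+1) → ℝ) ∘ i.succAbove),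
          (fun y j => F0 j y) (i.insertNth ((1:Fin (n+1) → ℝ) i) x) i) -
        ∫ x in Set.Icc ((0:Fin (n+1) → ℝ) ∘ i.succAbove) ((1:Fin (n+1) → ℝ) ∘ i.succAbove),
          (fun y j => F0 j y) (i.insertNth ((0:Fin (n+1) → ℝ) i) x) i) = 0 := by
    intro i
    by_cases h : i = a
    · subst h
      have hfront : ∀ x : Fin n → ℝ,
          W (i.insertNth ((1:Fin (n+1) → ℝ) i) x) = W (i.insertNth ((0:Fin (n+1) → ℝ) i) x) := by
        intro x
        rw [Pi.one_apply, Pi.zero_apply, hins, hWper]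
      simp only [hF0, if_pos rfl, hfront, sub_self]
    · simp [hF0, h]
  rw [Fintype.sum_eq_zero _ hRHS0] at key
  -- identify the integrand in `key`
  have hkey2 : (∫ y in Set.Icc (0:Fin (n+1) → ℝ) 1, fderiv ℝ W y (Pi.single a 1)) = 0 := by
    rw [← key]
    refine setIntegral_congr_fun measurableSet_Icc fun y _ => ?_
    rw [← hdivpt y]
    simp [ContinuousLinearMap.pi_apply]
  -- transfer back to the cube
  have hvol := EuclideanSpace.volume_preserving_symm_measurableEquiv_toLp (Fin (n+1))
  have hemb : MeasurableEmbedding (MeasurableEquiv.toLp 2 (Fin (n+1) → ℝ)).symm :=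
    (MeasurableEquiv.toLp 2 (Fin (n+1) → ℝ)).symm.measurableEmbedding
  have hpre : (MeasurableEquiv.toLp 2 (Fin (n+1) → ℝ)).symm ⁻¹' (Set.Icc 0 1) = cube (n+1) := by
    ext x
    simp only [Set.mem_preimage, Set.mem_Icc, Pi.le_def, cube, Set.mem_setOf_eq, Set.mem_Icc,
      ← forall_and]
    rfl
  have htrans := hvol.setIntegral_preimage_emb hemb
    (fun y => fderiv ℝ W y (Pi.single a 1)) (Set.Icc 0 1)
  have hsingle2 : (eqv.symm (Pi.single a 1) : E (n+1)) = eE (n+1) a := by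
    ext j
    by_cases h : j = a <;> simp [eE, EuclideanSpace.single_apply, Pi.single_apply, h, eqv]
  have hpt : ∀ x : E (n+1),
      fderiv ℝ W ((MeasurableEquiv.toLp 2 (Fin (n+1) → ℝ)).symm x) (Pi.single a 1)
        = fderiv ℝ w x (eE (n+1) a) := by
    intro x
    set y := (MeasurableEquiv.toLp 2 (Fin (n+1) → ℝ)).symm x with hy
    have hxy : eqv.symm y = x := rfl
    have hW2 : HasFDerivAt W
        ((fderiv ℝ w (eqv.symm y)).comp (eqv.symm : (Fin (n+1) → ℝ) →L[ℝ] E (n+1))) y :=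
      HasFDerivAt.comp y ((hw.differentiable (by simp)) (eqv.symm y)).hasFDerivAt eqv.symm.hasFDerivAt
    rw [hW2.fderiv]
    show fderiv ℝ w (eqv.symm y) (eqv.symm (Pi.single a 1)) = _
    rw [hsingle2, hxy]
  calc (∫ x in cube (n+1), fderiv ℝ w x (eE (n+1) a))
      = ∫ x in (MeasurableEquiv.toLp 2 (Fin (n+1) → ℝ)).symm ⁻¹' (Set.Icc 0 1),
          fderiv ℝ W ((MeasurableEquiv.toLp 2 (Fin (n+1) → ℝ)).symm x) (Pi.single a 1) := by
        rw [hpre]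
        exact setIntegral_congr_fun (by rw [← hpre]; exact (MeasurableEquiv.toLp 2 (Fin (n+1) → ℝ)).symm.measurable measurableSet_Icc) (fun x _ => (hpt x).symm)
    _ = ∫ y in Set.Icc (0:Fin (n+1) → ℝ) 1, fderiv ℝ W y (Pi.single a 1) := htrans
    _ = 0 := hkey2


lemma cube_eq (m : ℕ) :
    cube m = (EuclideanSpace.equiv (Fin m) ℝ) ⁻¹' (Set.Icc 0 1) := by
  ext x
  simp only [Set.mem_preimage, Set.mem_Icc, Pi.le_def, cube, Set.mem_setOf_eq, Set.mem_Icc,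
    ← forall_and]
  rfl

lemma isCompact_cube (m : ℕ) : IsCompact (cube m) := by
  rw [cube_eq]
  exact (EuclideanSpace.equiv (Fin m) ℝ).toHomeomorph.isCompact_preimage.2 isCompact_Icc

lemma measurableSet_cube (m : ℕ) : MeasurableSet (cube m) :=
  (isCompact_cube m).isClosed.measurableSet


end EnergyAux

open EnergyAux in
/-- for a positive periodic solution of the heat equation,
`E'(t) = ∫ (−2(Δf)² + 3|∇f|²Δf − |∇f|⁴) u` where `f = −ln u`. -/
theorem energy_deriv_formula (m : ℕ) (u : ℝ → E m → ℝ)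
    (hu : ContDiff ℝ (⊤ : ℕ∞) (Function.uncurry u)) (hpos : ∀ t x, 0 < u t x)
    (hper : ∀ (t : ℝ) (x : E m) (k : Fin m → ℤ), u t (x + latt m k) = u t x)
    (hheat : ∀ t x, deriv (fun s => u s x) t = lapE m (u t) x)
    (f : ℝ → E m → ℝ) (hf : f = fun t x => -Real.log (u t x))
    (Ent : ℝ → ℝ)
    (hE : Ent = fun t => ∫ x in cube m, ‖gradient (f t) x‖ ^ 2 * u t x)
    (t : ℝ) :
    HasDerivAt Ent
      (∫ x in cube m,
        (-2 * (lapE m (f t) x) ^ 2 + 3 * ‖gradient (f t) x‖ ^ 2 * lapE m (f t) x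
          - ‖gradient (f t) x‖ ^ 4) * u t x) t := by
  classical
  set Φ : ℝ × E m → ℝ := Function.uncurry f with hΦdef
  set U : ℝ × E m → ℝ := Function.uncurry u with hUdef
  have hUpos : ∀ z, 0 < U z := fun z => hpos z.1 z.2
  have hΦ : ContDiff ℝ (⊤ : ℕ∞) Φ := by
    have : Φ = fun z : ℝ × E m => -Real.log (U z) := by
      funext z; simp only [hΦdef, hUdef, hf]; rfl
    rw [this]
    exact (hu.log fun z => (hUpos z).ne').neg
  -- basic objects
  set p : Fin m → (ℝ × E m → ℝ) := fun a => pd ((0:ℝ), eE m a) Φ with hpdef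
  set q : Fin m → (ℝ × E m → ℝ) := fun a => pd ((0:ℝ), eE m a) (p a) with hqdef
  set S : ℝ × E m → ℝ := fun z => ∑ a, (p a z) ^ 2 with hSdef
  set L : ℝ × E m → ℝ := fun z => ∑ a, q a z with hLdef
  set Gg : ℝ × E m → ℝ := fun z => L z - S z with hGdef
  set Fc : ℝ × E m → ℝ := fun z => S z * U z with hFcdef
  set R : ℝ × E m → ℝ :=
    fun z => (-2 * (L z) ^ 2 + 3 * S z * L z - (S z) ^ 2) * U z with hRdef
  set V : Fin m → (ℝ × E m → ℝ) := fun a z => (Gg z * U z) * p a z with hVdef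
  -- smoothness
  have hp : ∀ a, ContDiff ℝ (⊤ : ℕ∞) (p a) := fun a => pd_smooth hΦ _
  have hq : ∀ a, ContDiff ℝ (⊤ : ℕ∞) (q a) := fun a => pd_smooth (hp a) _
  have hS : ContDiff ℝ (⊤ : ℕ∞) S := ContDiff.sum fun a _ => (hp a).pow 2
  have hL : ContDiff ℝ (⊤ : ℕ∞) L := ContDiff.sum fun a _ => hq a
  have hG : ContDiff ℝ (⊤ : ℕ∞) Gg := hL.sub hS
  have hFc : ContDiff ℝ (⊤ : ℕ∞) Fc := hS.mul hu
  have hV : ∀ a, ContDiff ℝ (⊤ : ℕ∞) (V a) := fun a => (hG.mul hu).mul (hp a)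
  -- identification of gradient and laplacian
  have hgrad : ∀ (s : ℝ) (x : E m), ‖gradient (f s) x‖ ^ 2 = S (s, x) := by
    intro s x
    rw [norm_gradient_sq]
    refine Finset.sum_congr rfl fun a _ => ?_
    have h : fderiv ℝ (f s) x (eE m a) = p a (s, x) := fderiv_slice hΦ s x (eE m a)
    rw [h]
  have hlap : ∀ (s : ℝ) (x : E m), lapE m (f s) x = L (s, x) := fun s x =>
    lap_slice hΦ s x
  -- exponential representation and derivatives of U
  have hUexp : U = fun z => Real.exp (-(Φ z)) := by
    funext z
    have : Φ z = -Real.log (U z) := by simp only [hΦdef, hUdef, hf]; rfl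
    rw [this, neg_neg, Real.exp_log (hUpos z)]
  have hpdU : ∀ (v : ℝ × E m) z, pd v U z = -(U z) * pd v Φ z := by
    intro v z
    conv_lhs => rw [hUexp]
    rw [pd_exp hΦ.neg v z]
    rw [pd_neg]
    have hz : Real.exp (-Φ z) = U z := (congrFun hUexp z).symm
    rw [hz]
    ring
  -- heat equation in pd form
  have hheat' : ∀ z : ℝ × E m,
      pd ((1:ℝ), (0:E m)) U z = ∑ a, pd ((0:ℝ), eE m a) (pd ((0:ℝ), eE m a) U) z := by
    rintro ⟨s, x⟩
    have h1 : deriv (fun s' => U (s', x)) s = pd ((1:ℝ), (0:E m)) U (s, x) :=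
      (hasDerivAt_slice hu s x).deriv
    have h2 : lapE m (u s) x = ∑ a, pd ((0:ℝ), eE m a) (pd ((0:ℝ), eE m a) U) (s, x) :=
      lap_slice hu s x
    rw [← h1, ← h2]
    exact hheat s x
  -- second derivatives of U
  have hqU : ∀ (a : Fin m) z, pd ((0:ℝ), eE m a) (pd ((0:ℝ), eE m a) U) z
      = U z * (p a z * p a z - q a z) := by
    intro a z
    have h1 : pd ((0:ℝ), eE m a) U = fun z => (fun z => -(U z)) z * p a z := by
      funext y; rw [hpdU]
    rw [h1, pd_mul hu.neg (hp a)]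
    have h2 : pd ((0:ℝ), eE m a) (fun z => -(U z)) z = -(pd ((0:ℝ), eE m a) U z) := pd_neg _ _
    rw [h2, hpdU]
    simp only [hqdef]
    ring
  -- time derivative of Φ
  have hPtΦ : ∀ z, pd ((1:ℝ), (0:E m)) Φ z = Gg z := by
    intro z
    have h1 : pd ((1:ℝ), (0:E m)) U z = U z * (S z - L z) := by
      rw [hheat']
      have : ∀ a : Fin m, a ∈ Finset.univ →
          pd ((0:ℝ), eE m a) (pd ((0:ℝ), eE m a) U) z = U z * ((p a z)^2 - q a z) := by
        intro a _; rw [hqU]; ring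
      rw [Finset.sum_congr rfl this]
      simp only [hSdef, hLdef, Finset.mul_sum, ← Finset.sum_sub_distrib]
    have h2 : pd ((1:ℝ), (0:E m)) U z = -(U z) * pd ((1:ℝ), (0:E m)) Φ z := hpdU _ z
    have h3 : U z * pd ((1:ℝ), (0:E m)) Φ z = U z * Gg z := by
      simp only [hGdef]
      linear_combination h2 - h1
    exact mul_left_cancel₀ (hUpos z).ne' h3
  -- mixed derivative swap
  have hPtp : ∀ (a : Fin m) z, pd ((1:ℝ), (0:E m)) (p a) z = pd ((0:ℝ), eE m a) Gg z := by
    intro a z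
    have h1 : pd ((1:ℝ), (0:E m)) (p a) z
        = pd ((0:ℝ), eE m a) (pd ((1:ℝ), (0:E m)) Φ) z := by
      simp only [hpdef]
      exact pd_comm hΦ _ _ z
    have h2 : pd ((1:ℝ), (0:E m)) Φ = Gg := funext hPtΦ
    rw [h1, h2]
  -- the key pointwise identity
  have hkey : ∀ z, pd ((1:ℝ), (0:E m)) Fc z
      = R z + 2 * ∑ a, pd ((0:ℝ), eE m a) (V a) z := by
    intro z
    have e1 : pd ((1:ℝ), (0:E m)) Fc z
        = pd ((1:ℝ), (0:E m)) S z * U z + S z * pd ((1:ℝ), (0:E m)) U z :=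
      pd_mul hS hu _ z
    have e2 : pd ((1:ℝ), (0:E m)) S z
        = 2 * ∑ a, pd ((0:ℝ), eE m a) Gg z * p a z := by
      have h1 : pd ((1:ℝ), (0:E m)) S z = ∑ a, pd ((1:ℝ), (0:E m)) (fun y => (p a y)^2) z :=
        pd_sum Finset.univ (fun a => (hp a).pow 2) _ z
      rw [h1, Finset.mul_sum]
      refine Finset.sum_congr rfl fun a _ => ?_
      rw [pd_sq (hp a), hPtp a z]
      ring
    have e3 : ∀ a : Fin m, pd ((0:ℝ), eE m a) (V a) z
        = (pd ((0:ℝ), eE m a) Gg z * U z + Gg z * (-(U z) * p a z)) * p a z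
          + (Gg z * U z) * q a z := by
      intro a
      have h1 : pd ((0:ℝ), eE m a) (V a) z
          = pd ((0:ℝ), eE m a) (fun y => Gg y * U y) z * p a z
            + (Gg z * U z) * pd ((0:ℝ), eE m a) (p a) z :=
        pd_mul (hG.mul hu) (hp a) _ z
      rw [h1, pd_mul hG hu, hpdU]
    have e4 : ∑ a, pd ((0:ℝ), eE m a) (V a) z
        = U z * (∑ a, pd ((0:ℝ), eE m a) Gg z * p a z) - (Gg z * U z) * S z
          + (Gg z * U z) * L z := by
      simp only [hSdef, hLdef, Finset.mul_sum, ← Finset.sum_sub_distrib,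
        ← Finset.sum_add_distrib]
      refine Finset.sum_congr rfl fun a _ => ?_
      rw [e3 a]
      ring
    rw [e1, e2, e4, hpdU _ z, hPtΦ z]
    simp only [hRdef, hGdef]
    ring
  -- periodicity
  have hUper : ∀ (z : ℝ × E m) (k : Fin m → ℤ), U (z + ((0:ℝ), latt m k)) = U z := by
    rintro ⟨s, x⟩ k
    show u (s + 0) (x + latt m k) = u s x
    rw [add_zero, hper]
  have hΦper : ∀ (z : ℝ × E m) (k : Fin m → ℤ), Φ (z + ((0:ℝ), latt m k)) = Φ z := by
    intro z k
    have h : ∀ y : ℝ × E m, Φ y = -Real.log (U y) := by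
      intro y; simp only [hΦdef, hUdef, hf]; rfl
    rw [h, h, hUper]
  have hpdper : ∀ (g : ℝ × E m → ℝ), ContDiff ℝ (⊤ : ℕ∞) g →
      (∀ (z : ℝ × E m) (k : Fin m → ℤ), g (z + ((0:ℝ), latt m k)) = g z) →
      ∀ (v : ℝ × E m) (z : ℝ × E m) (k : Fin m → ℤ),
        pd v g (z + ((0:ℝ), latt m k)) = pd v g z := by
    intro g hg hgper v z k
    exact fderiv_periodic (pd_diff hg) ((0:ℝ), latt m k) (fun y => hgper y k) z v
  have hVper : ∀ (a : Fin m) (z : ℝ × E m) (k : Fin m → ℤ),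
      V a (z + ((0:ℝ), latt m k)) = V a z := by
    intro a z k
    have hpp : ∀ b : Fin m, p b (z + ((0:ℝ), latt m k)) = p b z := fun b =>
      hpdper Φ hΦ hΦper _ z k
    have hqq : ∀ b : Fin m, q b (z + ((0:ℝ), latt m k)) = q b z := fun b =>
      hpdper (p b) (hp b) (fun y k' => hpdper Φ hΦ hΦper _ y k') _ z k
    simp only [hVdef, hGdef, hLdef, hSdef]
    rw [hUper]
    simp only [hpp, hqq]
  -- the divergence terms integrate to zero
  have hdiv0 : ∀ a : Fin m, (∫ x in cube m, pd ((0:ℝ), eE m a) (V a) (t, x)) = 0 := by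
    intro a
    have hsl : ∀ x : E m, pd ((0:ℝ), eE m a) (V a) (t, x)
        = fderiv ℝ (fun y => V a (t, y)) x (eE m a) := fun x =>
      (fderiv_slice (hV a) t x (eE m a)).symm
    have h1 : (∫ x in cube m, pd ((0:ℝ), eE m a) (V a) (t, x))
        = ∫ x in cube m, fderiv ℝ (fun y => V a (t, y)) x (eE m a) := by
      exact setIntegral_congr_fun (measurableSet_cube m) fun x _ => hsl x
    rw [h1]
    refine integral_pd_eq_zero _ (slice_smooth (hV a) t) ?_ a
    intro x k
    have h2 : ((t : ℝ), x + latt m k) = (t, x) + ((0:ℝ), latt m k) := by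
      simp [Prod.ext_iff]
    show V a (t, x + latt m k) = V a (t, x)
    rw [h2, hVper]
  -- rewrite Ent
  have hEnt2 : Ent = fun s => ∫ x in cube m, Fc (s, x) := by
    rw [hE]
    funext s
    have h : (fun x => ‖gradient (f s) x‖ ^ 2 * u s x) = fun x => Fc (s, x) := by
      funext x
      rw [hgrad s x]
      rfl
    rw [h]
  -- dominated differentiation under the integral
  have hcontF' : Continuous (pd ((1:ℝ), (0:E m)) Fc) := (pd_smooth hFc _).continuous
  obtain ⟨C, hC⟩ : ∃ C, ∀ z ∈ (Set.Icc (t-1) (t+1) ×ˢ cube m),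
      ‖pd ((1:ℝ), (0:E m)) Fc z‖ ≤ C :=
    (isCompact_Icc.prod (isCompact_cube m)).exists_bound_of_continuousOn
      hcontF'.continuousOn
  have hmain : HasDerivAt (fun s => ∫ x in cube m, Fc (s, x))
      (∫ x in cube m, pd ((1:ℝ), (0:E m)) Fc (t, x)) t := by
    have key := hasDerivAt_integral_of_dominated_loc_of_deriv_le
      (F := fun s x => Fc (s, x)) (F' := fun s x => pd ((1:ℝ), (0:E m)) Fc (s, x))
      (μ := volume.restrict (cube m)) (x₀ := t) (bound := fun _ => C)
      (Metric.ball_mem_nhds t one_pos) ?meas ?int ?meas' ?bound ?bint ?diff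
    exact key.2
    case meas =>
      filter_upwards with s
      exact (hFc.continuous.comp (Continuous.prodMk_right s)).aestronglyMeasurable
    case int =>
      exact ((hFc.continuous.comp (Continuous.prodMk_right t)).continuousOn).integrableOn_compact
        (isCompact_cube m)
    case meas' =>
      exact (hcontF'.comp (Continuous.prodMk_right t)).aestronglyMeasurable
    case bound =>
      rw [ae_restrict_iff' (measurableSet_cube m)]
      filter_upwards with x hx
      intro s hs
      have hs' : s ∈ Set.Icc (t-1) (t+1) := by
        rw [Metric.mem_ball, Real.dist_eq] at hs
        have := abs_lt.1 hs
        constructor <;> linarith [this.1, this.2]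
      exact hC (s, x) (Set.mk_mem_prod hs' hx)
    case bint =>
      exact integrableOn_const ((isCompact_cube m).measure_lt_top.ne)
    case diff =>
      filter_upwards with x
      intro s _
      exact hasDerivAt_slice hFc s x
  -- compute the value of the derivative
  have hIR : IntegrableOn (fun x => R (t, x)) (cube m) := by
    have hRsm : ContDiff ℝ (⊤ : ℕ∞) R :=
      (((contDiff_const.mul (hL.pow 2)).add
        ((contDiff_const.mul hS).mul hL)).sub (hS.pow 2)).mul hu
    have hRc : Continuous R := hRsm.continuous
    exact (hRc.comp (Continuous.prodMk_right t)).continuousOn.integrableOn_compact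
      (isCompact_cube m)
  have hIV : ∀ a : Fin m, IntegrableOn (fun x => pd ((0:ℝ), eE m a) (V a) (t, x)) (cube m) := by
    intro a
    exact (((pd_smooth (hV a) _).continuous.comp
      (Continuous.prodMk_right t)).continuousOn).integrableOn_compact (isCompact_cube m)
  have hval : (∫ x in cube m, pd ((1:ℝ), (0:E m)) Fc (t, x))
      = ∫ x in cube m, R (t, x) := by
    have h1 : (∫ x in cube m, pd ((1:ℝ), (0:E m)) Fc (t, x))
        = ∫ x in cube m, (R (t, x) + 2 * ∑ a, pd ((0:ℝ), eE m a) (V a) (t, x)) :=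
      setIntegral_congr_fun (measurableSet_cube m) fun x _ => hkey (t, x)
    rw [h1]
    have hIsum : IntegrableOn (fun x => ∑ a, pd ((0:ℝ), eE m a) (V a) (t, x)) (cube m) :=
      MeasureTheory.integrable_finset_sum _ fun a _ => hIV a
    rw [integral_add hIR (hIsum.const_mul 2)]
    rw [MeasureTheory.integral_const_mul]
    rw [MeasureTheory.integral_finset_sum _ fun a _ => hIV a]
    simp only [hdiv0]
    simp
  -- finish
  rw [hEnt2]
  have htarget : (∫ x in cube m,
      (-2 * (lapE m (f t) x) ^ 2 + 3 * ‖gradient (f t) x‖ ^ 2 * lapE m (f t) x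
        - ‖gradient (f t) x‖ ^ 4) * u t x) = ∫ x in cube m, R (t, x) := by
    refine setIntegral_congr_fun (measurableSet_cube m) fun x _ => ?_
    have h4 : ‖gradient (f t) x‖ ^ 4 = (‖gradient (f t) x‖ ^ 2) ^ 2 := by ring
    rw [h4, hgrad t x, hlap t x]
    rfl
  rw [htarget, ← hval]
  exact hmain
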